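/- If the SARK coefficients satisfy the seven third-order conditions 3Σb_i(Σ_{j<i}a_{ij})²=1, 3Σb_i(Σ_{j<i}d_{ij})²=1, 3Σb_i(Σ_{j<i}a_{ij})(Σ_{j<i}d_{ij})=1, 6ΣΣΣ b_i a_{ij} a_{jk}=1, 6ΣΣΣ b_i a_{ij} d_{jk}=1, 3ΣΣΣ b_i d_{ij} a_{jk}=1, 3ΣΣΣ b_i d_{ij} d_{jk}=1 (sums over i ≤ s, j < i, k < j), then the third derivative of the discrete SARK flow at τ=0 equals the third derivative of the exact flow, for all smooth Ã, M̃₁ and all Y₀. -/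

import Mathlib

open Finset

section helpers
variable {E : Type*} [NormedAddCommGroup E] [NormedSpace ℝ E]

private lemma smul_deriv' {F : ℝ → E} (hF : Differentiable ℝ F) (t : ℝ) :
    HasDerivAt (fun u => u • F u) (F t + t • deriv F t) t := by
  have := (hasDerivAt_id t).fun_smul (hF t).hasDerivAt
  simpa [add_comm] using this

private lemma comp_deriv' {A : E → E} {Z : ℝ → E} (hA : ContDiff ℝ 3 A)
    (hZ : Differentiable ℝ Z) (t : ℝ) :
    HasDerivAt (fun u => A (Z u)) (fderiv ℝ A (Z t) (deriv Z t)) t :=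
  ((hA.differentiable (by norm_num)).differentiableAt.hasFDerivAt).comp_hasDerivAt t (hZ t).hasDerivAt

private lemma fderiv_apply_deriv' {A : E → E} {Z W : ℝ → E} (hA : ContDiff ℝ 3 A)
    (hZ : Differentiable ℝ Z) (hW : Differentiable ℝ W) (t : ℝ) :
    HasDerivAt (fun u => fderiv ℝ A (Z u) (W u))
      ((fderiv ℝ (fderiv ℝ A) (Z t) (deriv Z t)) (W t) + fderiv ℝ A (Z t) (deriv W t)) t := by
  have hA' : ContDiff ℝ 2 (fderiv ℝ A) := hA.fderiv_right (by norm_num)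
  have h1 : HasDerivAt (fun u => fderiv ℝ A (Z u)) (fderiv ℝ (fderiv ℝ A) (Z t) (deriv Z t)) t :=
    ((hA'.differentiable (by norm_num)).differentiableAt.hasFDerivAt).comp_hasDerivAt t (hZ t).hasDerivAt
  exact h1.clm_apply (hW t).hasDerivAt

private lemma deriv_contDiff' {F : ℝ → E} (h : ContDiff ℝ 3 F) : ContDiff ℝ 2 (deriv F) :=
  ((contDiff_succ_iff_deriv (n := 2)).mp (by norm_num; exact h)).2.2

private lemma deriv_contDiff'' {F : ℝ → E} (h : ContDiff ℝ 2 F) : ContDiff ℝ 1 (deriv F) :=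
  ((contDiff_succ_iff_deriv (n := 1)).mp (by norm_num; exact h)).2.2

private lemma cubic_expand {Y₀ : E} {F g : ℝ → E} (hF : ContDiff ℝ 3 F)
    (hg : ∀ τ, g τ = Y₀ + τ • F τ) :
    deriv g 0 = F 0 ∧ deriv (deriv g) 0 = deriv F 0 + deriv F 0 ∧
      deriv (deriv (deriv g)) 0
        = deriv (deriv F) 0 + (deriv (deriv F) 0 + deriv (deriv F) 0) := by
  have hFd : Differentiable ℝ F := hF.differentiable (by norm_num)
  have hF1 : ContDiff ℝ 2 (deriv F) := deriv_contDiff' hF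
  have hFd1 : Differentiable ℝ (deriv F) := hF1.differentiable (by norm_num)
  have hFd2 : Differentiable ℝ (deriv (deriv F)) :=
    (deriv_contDiff'' hF1).differentiable (by norm_num)
  have geq : g = fun τ => Y₀ + τ • F τ := funext hg
  have d1 : ∀ t, HasDerivAt g (F t + t • deriv F t) t := by
    intro t; rw [geq]
    simpa using (hasDerivAt_const t Y₀).fun_add (smul_deriv' hFd t)
  have c1 : deriv g = fun t => F t + t • deriv F t := funext fun t => (d1 t).deriv
  have d2 : ∀ t, HasDerivAt (deriv g)
      (deriv F t + (deriv F t + t • deriv (deriv F) t)) t := by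
    intro t; rw [c1]
    exact HasDerivAt.add (hFd t).hasDerivAt (smul_deriv' hFd1 t)
  have c2 : deriv (deriv g) = fun t => deriv F t + (deriv F t + t • deriv (deriv F) t) :=
    funext fun t => (d2 t).deriv
  have d3 : HasDerivAt (deriv (deriv g))
      (deriv (deriv F) 0 + (deriv (deriv F) 0 + ((deriv (deriv F) 0) + (0:ℝ) • deriv (deriv (deriv F)) 0))) 0 := by
    rw [c2]
    exact HasDerivAt.add (hFd1 0).hasDerivAt
      (HasDerivAt.add (hFd1 0).hasDerivAt (smul_deriv' hFd2 0))
  refine ⟨by rw [c1]; simp, by rw [c2]; simp, ?_⟩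
  have := d3.deriv
  simpa using this

end helpers

/-- The seven third-order conditions imply matching of third derivatives. -/
theorem stmt12 {m s : ℕ}
    (A M1 : (Fin m → ℝ) → (Fin m → ℝ)) (Y₀ : Fin m → ℝ)
    (b : Fin s → ℝ) (a d : Fin s → Fin s → ℝ)
    (Z Y : ℝ → (Fin m → ℝ))
    (Zs : Fin s → ℝ → (Fin m → ℝ)) (Yt : ℝ → (Fin m → ℝ))
    (hA : ContDiff ℝ 3 A) (hM : ContDiff ℝ 3 M1)
    (hZ : ContDiff ℝ 3 Z) (hY : ContDiff ℝ 3 Y)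
    (hodeZ : ∀ t : ℝ, deriv Z t = A (Z t) + deriv (fun u => u • M1 (Z u)) t)
    (hodeY : ∀ t : ℝ, deriv Y t = A (Z t))
    (hZ0 : Z 0 = Y₀) (hY0 : Y 0 = Y₀)
    (hZs : ∀ i τ, Zs i τ
      = Y₀ + τ • ∑ j ∈ Finset.Iio i, (d i j • M1 (Zs j τ) + a i j • A (Zs j τ)))
    (hYt : ∀ τ, Yt τ = Y₀ + τ • ∑ i, b i • A (Zs i τ))
    (hc1 : 3 * ∑ i, b i * (∑ j ∈ Finset.Iio i, a i j)^2 = 1)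
    (hc2 : 3 * ∑ i, b i * (∑ j ∈ Finset.Iio i, d i j)^2 = 1)
    (hc3 : 3 * ∑ i, b i * (∑ j ∈ Finset.Iio i, a i j) * (∑ j ∈ Finset.Iio i, d i j) = 1)
    (hc4 : 6 * ∑ i, ∑ j ∈ Finset.Iio i, ∑ k ∈ Finset.Iio j, b i * a i j * a j k = 1)
    (hc5 : 6 * ∑ i, ∑ j ∈ Finset.Iio i, ∑ k ∈ Finset.Iio j, b i * a i j * d j k = 1)
    (hc6 : 3 * ∑ i, ∑ j ∈ Finset.Iio i, ∑ k ∈ Finset.Iio j, b i * d i j * a j k = 1)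
    (hc7 : 3 * ∑ i, ∑ j ∈ Finset.Iio i, ∑ k ∈ Finset.Iio j, b i * d i j * d j k = 1) :
    iteratedDeriv 3 Yt 0 = iteratedDeriv 3 Y 0 := by
  -- smoothness of the internal stages
  have hZsC : ∀ i : Fin s, ContDiff ℝ 3 (Zs i) := by
    have key : ∀ n : ℕ, ∀ i : Fin s, (i : ℕ) < n → ContDiff ℝ 3 (Zs i) := by
      intro n
      induction n with
      | zero => intro i hi; omega
      | succ n ih =>
        intro i hi
        have hfun : Zs i = fun τ =>
            Y₀ + τ • ∑ j ∈ Finset.Iio i, (d i j • M1 (Zs j τ) + a i j • A (Zs j τ)) :=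
          funext (hZs i)
        rw [hfun]
        refine contDiff_const.add (ContDiff.smul contDiff_id ?_)
        refine ContDiff.sum fun j hj => ?_
        have hj2 : (j : ℕ) < n := by
          have := Fin.lt_def.mp (Finset.mem_Iio.mp hj)
          omega
        exact ((hM.comp (ih j hj2)).const_smul (d i j)).add
          ((hA.comp (ih j hj2)).const_smul (a i j))
    exact fun i => key ((i : ℕ) + 1) i (Nat.lt_succ_self _)
  have hZsd : ∀ i : Fin s, Differentiable ℝ (Zs i) :=
    fun i => (hZsC i).differentiable (by norm_num)
  have hSC : ∀ i : Fin s, ContDiff ℝ 3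
      (fun τ => ∑ j ∈ Finset.Iio i, (d i j • M1 (Zs j τ) + a i j • A (Zs j τ))) :=
    fun i => ContDiff.sum fun j _ =>
      ((hM.comp (hZsC j)).const_smul (d i j)).add ((hA.comp (hZsC j)).const_smul (a i j))
  have cubic := fun i => cubic_expand (hSC i) (hZs i)
  have hZs00 : ∀ i, Zs i 0 = Y₀ := fun i => by rw [hZs i 0]; simp
  set w : Fin s → (Fin m → ℝ) := fun i =>
    (∑ j ∈ Finset.Iio i, d i j) • M1 Y₀ + (∑ j ∈ Finset.Iio i, a i j) • A Y₀ with hwdef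
  have hw : ∀ i, deriv (Zs i) 0 = w i := by
    intro i
    rw [(cubic i).1]
    simp only [hZs00, hwdef]
    rw [Finset.sum_add_distrib, ← Finset.sum_smul, ← Finset.sum_smul]
  set T : Fin s → (Fin m → ℝ) := fun i =>
    ∑ j ∈ Finset.Iio i, (d i j • fderiv ℝ M1 Y₀ (w j) + a i j • fderiv ℝ A Y₀ (w j)) with hTdef
  -- derivative of the stage sums at 0
  have hdS : ∀ i, HasDerivAt
      (fun τ => ∑ j ∈ Finset.Iio i, (d i j • M1 (Zs j τ) + a i j • A (Zs j τ)))
      (∑ j ∈ Finset.Iio i, (d i j • fderiv ℝ M1 (Zs j 0) (deriv (Zs j) 0)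
        + a i j • fderiv ℝ A (Zs j 0) (deriv (Zs j) 0))) 0 :=
    fun i => HasDerivAt.fun_sum fun j _ =>
      ((comp_deriv' hM (hZsd j) 0).fun_const_smul (d i j)).fun_add
        ((comp_deriv' hA (hZsd j) 0).fun_const_smul (a i j))
  have hdS0 : ∀ i, deriv
      (fun τ => ∑ j ∈ Finset.Iio i, (d i j • M1 (Zs j τ) + a i j • A (Zs j τ))) 0 = T i := by
    intro i
    rw [(hdS i).deriv, hTdef]
    exact Finset.sum_congr rfl fun j _ => by rw [hZs00 j, hw j]
  have hT : ∀ i, deriv (deriv (Zs i)) 0 = T i + T i := by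
    intro i
    rw [(cubic i).2.1, hdS0 i]
  -- second derivative of G at 0
  have hGC : ContDiff ℝ 3 (fun τ => ∑ i, b i • A (Zs i τ)) :=
    ContDiff.sum fun i _ => (hA.comp (hZsC i)).const_smul (b i)
  have hdG : ∀ t, HasDerivAt (fun τ => ∑ i, b i • A (Zs i τ))
      (∑ i, b i • fderiv ℝ A (Zs i t) (deriv (Zs i) t)) t :=
    fun t => HasDerivAt.fun_sum fun i _ => (comp_deriv' hA (hZsd i) t).fun_const_smul (b i)
  have hderivG : deriv (fun τ => ∑ i, b i • A (Zs i τ))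
      = fun t => ∑ i, b i • fderiv ℝ A (Zs i t) (deriv (Zs i) t) :=
    funext fun t => (hdG t).deriv
  have hddG0 : deriv (deriv (fun τ => ∑ i, b i • A (Zs i τ))) 0
      = ∑ i, b i • ((fderiv ℝ (fderiv ℝ A) Y₀ (w i)) (w i) + fderiv ℝ A Y₀ (T i + T i)) := by
    rw [hderivG]
    have h2 : HasDerivAt (fun t => ∑ i, b i • fderiv ℝ A (Zs i t) (deriv (Zs i) t))
        (∑ i, b i • ((fderiv ℝ (fderiv ℝ A) (Zs i 0) (deriv (Zs i) 0)) (deriv (Zs i) 0)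
          + fderiv ℝ A (Zs i 0) (deriv (deriv (Zs i)) 0))) 0 :=
      HasDerivAt.fun_sum fun i _ =>
        (fderiv_apply_deriv' hA (hZsd i)
          ((deriv_contDiff' (hZsC i)).differentiable (by norm_num)) 0).fun_const_smul (b i)
    rw [h2.deriv]
    exact Finset.sum_congr rfl fun i _ => by rw [hZs00 i, hw i, hT i]
  -- third derivative of Yt at 0
  have it3 : ∀ f : ℝ → (Fin m → ℝ), iteratedDeriv 3 f 0 = deriv (deriv (deriv f)) 0 := by
    intro f
    rw [show (3:ℕ) = 2+1 by rfl, iteratedDeriv_succ, show (2:ℕ) = 1+1 by rfl,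
      iteratedDeriv_succ, iteratedDeriv_one]
  have cubicY := cubic_expand hGC hYt
  have hYt3 : iteratedDeriv 3 Yt 0
      = (∑ i, b i • ((fderiv ℝ (fderiv ℝ A) Y₀ (w i)) (w i) + fderiv ℝ A Y₀ (T i + T i)))
      + ((∑ i, b i • ((fderiv ℝ (fderiv ℝ A) Y₀ (w i)) (w i) + fderiv ℝ A Y₀ (T i + T i)))
      + (∑ i, b i • ((fderiv ℝ (fderiv ℝ A) Y₀ (w i)) (w i) + fderiv ℝ A Y₀ (T i + T i)))) := by
    rw [it3 Yt, cubicY.2.2, hddG0]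
  -- exact flow side
  have hZd : Differentiable ℝ Z := hZ.differentiable (by norm_num)
  have hMZd : ∀ t, HasDerivAt (fun u => M1 (Z u)) (fderiv ℝ M1 (Z t) (deriv Z t)) t :=
    fun t => comp_deriv' hM hZd t
  have hFC : ContDiff ℝ 3 (fun t => M1 (Z t)) := hM.comp hZ
  have hderivZ : deriv Z = fun t => A (Z t) + (M1 (Z t) + t • deriv (fun u => M1 (Z u)) t) := by
    funext t
    rw [hodeZ t]
    congr 1
    exact (smul_deriv' (hFC.differentiable (by norm_num)) t).deriv
  have hz1 : deriv Z 0 = A Y₀ + M1 Y₀ := by rw [hderivZ]; simp [hZ0]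
  have hdFC1 : Differentiable ℝ (deriv (fun u => M1 (Z u))) :=
    (deriv_contDiff' hFC).differentiable (by norm_num)
  have e1 : deriv (fun u => M1 (Z u)) 0 = fderiv ℝ M1 Y₀ (A Y₀ + M1 Y₀) := by
    rw [(hMZd 0).deriv, hZ0, hz1]
  have hddZ0 : deriv (deriv Z) 0 = fderiv ℝ A Y₀ (A Y₀ + M1 Y₀)
      + (fderiv ℝ M1 Y₀ (A Y₀ + M1 Y₀) + fderiv ℝ M1 Y₀ (A Y₀ + M1 Y₀)) := by
    have h' : HasDerivAt (fun t => A (Z t) + (M1 (Z t) + t • deriv (fun u => M1 (Z u)) t))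
        (fderiv ℝ A (Z 0) (deriv Z 0) + (fderiv ℝ M1 (Z 0) (deriv Z 0)
          + (deriv (fun u => M1 (Z u)) 0 + (0:ℝ) • deriv (deriv (fun u => M1 (Z u))) 0))) 0 :=
      HasDerivAt.add (comp_deriv' hA hZd 0)
        (HasDerivAt.add (hMZd 0) (smul_deriv' hdFC1 0))
    rw [hderivZ, h'.deriv, hZ0, hz1, e1, zero_smul, add_zero]
  have hY'' : deriv (deriv Y) = fun t => fderiv ℝ A (Z t) (deriv Z t) := by
    have h0 : deriv Y = fun t => A (Z t) := funext hodeY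
    rw [h0]
    exact funext fun t => (comp_deriv' hA hZd t).deriv
  have hY3 : iteratedDeriv 3 Y 0
      = (fderiv ℝ (fderiv ℝ A) Y₀ (A Y₀ + M1 Y₀)) (A Y₀ + M1 Y₀)
      + fderiv ℝ A Y₀ (fderiv ℝ A Y₀ (A Y₀ + M1 Y₀)
        + (fderiv ℝ M1 Y₀ (A Y₀ + M1 Y₀) + fderiv ℝ M1 Y₀ (A Y₀ + M1 Y₀))) := by
    rw [it3 Y, hY'']
    rw [(fderiv_apply_deriv' hA hZd ((deriv_contDiff' hZ).differentiable (by norm_num)) 0).deriv,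
      hZ0, hz1, hddZ0]
  -- preprocess the triple-sum conditions
  have hsum : ∀ (f g : Fin s → Fin s → ℝ),
      (∑ i, ∑ j ∈ Finset.Iio i, ∑ k ∈ Finset.Iio j, b i * f i j * g j k)
        = ∑ i, b i * ∑ j ∈ Finset.Iio i, f i j * ∑ k ∈ Finset.Iio j, g j k := by
    intro f g
    refine Finset.sum_congr rfl fun i _ => ?_
    simp only [Finset.mul_sum]
    exact Finset.sum_congr rfl fun j _ => Finset.sum_congr rfl fun k _ => by ring
  rw [hsum a a] at hc4
  rw [hsum a d] at hc5
  rw [hsum d a] at hc6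
  rw [hsum d d] at hc7
  -- expand the bilinear term
  have haveW : ∀ i, (fderiv ℝ (fderiv ℝ A) Y₀ (w i)) (w i)
      = ((∑ j ∈ Finset.Iio i, a i j) * (∑ j ∈ Finset.Iio i, a i j))
          • (fderiv ℝ (fderiv ℝ A) Y₀ (A Y₀)) (A Y₀)
      + ((∑ j ∈ Finset.Iio i, a i j) * (∑ j ∈ Finset.Iio i, d i j))
          • (fderiv ℝ (fderiv ℝ A) Y₀ (A Y₀)) (M1 Y₀)
      + ((∑ j ∈ Finset.Iio i, d i j) * (∑ j ∈ Finset.Iio i, a i j))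
          • (fderiv ℝ (fderiv ℝ A) Y₀ (M1 Y₀)) (A Y₀)
      + ((∑ j ∈ Finset.Iio i, d i j) * (∑ j ∈ Finset.Iio i, d i j))
          • (fderiv ℝ (fderiv ℝ A) Y₀ (M1 Y₀)) (M1 Y₀) := by
    intro i
    simp only [hwdef, map_add, map_smul, ContinuousLinearMap.add_apply,
      ContinuousLinearMap.smul_apply]
    module
  have haveT : ∀ i, fderiv ℝ A Y₀ (T i)
      = (∑ j ∈ Finset.Iio i, a i j * ∑ k ∈ Finset.Iio j, a j k)
          • fderiv ℝ A Y₀ (fderiv ℝ A Y₀ (A Y₀))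
      + (∑ j ∈ Finset.Iio i, a i j * ∑ k ∈ Finset.Iio j, d j k)
          • fderiv ℝ A Y₀ (fderiv ℝ A Y₀ (M1 Y₀))
      + (∑ j ∈ Finset.Iio i, d i j * ∑ k ∈ Finset.Iio j, a j k)
          • fderiv ℝ A Y₀ (fderiv ℝ M1 Y₀ (A Y₀))
      + (∑ j ∈ Finset.Iio i, d i j * ∑ k ∈ Finset.Iio j, d j k)
          • fderiv ℝ A Y₀ (fderiv ℝ M1 Y₀ (M1 Y₀)) := by
    intro i
    calc fderiv ℝ A Y₀ (T i)
        = ∑ j ∈ Finset.Iio i,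
            ((a i j * ∑ k ∈ Finset.Iio j, a j k) • fderiv ℝ A Y₀ (fderiv ℝ A Y₀ (A Y₀))
            + (a i j * ∑ k ∈ Finset.Iio j, d j k) • fderiv ℝ A Y₀ (fderiv ℝ A Y₀ (M1 Y₀))
            + (d i j * ∑ k ∈ Finset.Iio j, a j k) • fderiv ℝ A Y₀ (fderiv ℝ M1 Y₀ (A Y₀))
            + (d i j * ∑ k ∈ Finset.Iio j, d j k) • fderiv ℝ A Y₀ (fderiv ℝ M1 Y₀ (M1 Y₀))) := by
          simp only [hTdef]
          rw [map_sum]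
          refine Finset.sum_congr rfl fun j _ => ?_
          simp only [hwdef, map_add, map_smul]
          module
      _ = _ := by
          simp only [Finset.sum_add_distrib, ← Finset.sum_smul]
  have hX : (∑ i, b i • ((fderiv ℝ (fderiv ℝ A) Y₀ (w i)) (w i) + fderiv ℝ A Y₀ (T i + T i)))
      = (∑ i, b i * (∑ j ∈ Finset.Iio i, a i j) ^ 2)
          • (fderiv ℝ (fderiv ℝ A) Y₀ (A Y₀)) (A Y₀)
      + (∑ i, b i * (∑ j ∈ Finset.Iio i, a i j) * (∑ j ∈ Finset.Iio i, d i j))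
          • (fderiv ℝ (fderiv ℝ A) Y₀ (A Y₀)) (M1 Y₀)
      + (∑ i, b i * (∑ j ∈ Finset.Iio i, a i j) * (∑ j ∈ Finset.Iio i, d i j))
          • (fderiv ℝ (fderiv ℝ A) Y₀ (M1 Y₀)) (A Y₀)
      + (∑ i, b i * (∑ j ∈ Finset.Iio i, d i j) ^ 2)
          • (fderiv ℝ (fderiv ℝ A) Y₀ (M1 Y₀)) (M1 Y₀)
      + ((∑ i, b i * ∑ j ∈ Finset.Iio i, a i j * ∑ k ∈ Finset.Iio j, a j k)
          • fderiv ℝ A Y₀ (fderiv ℝ A Y₀ (A Y₀))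
        + (∑ i, b i * ∑ j ∈ Finset.Iio i, a i j * ∑ k ∈ Finset.Iio j, a j k)
          • fderiv ℝ A Y₀ (fderiv ℝ A Y₀ (A Y₀)))
      + ((∑ i, b i * ∑ j ∈ Finset.Iio i, a i j * ∑ k ∈ Finset.Iio j, d j k)
          • fderiv ℝ A Y₀ (fderiv ℝ A Y₀ (M1 Y₀))
        + (∑ i, b i * ∑ j ∈ Finset.Iio i, a i j * ∑ k ∈ Finset.Iio j, d j k)
          • fderiv ℝ A Y₀ (fderiv ℝ A Y₀ (M1 Y₀)))
      + ((∑ i, b i * ∑ j ∈ Finset.Iio i, d i j * ∑ k ∈ Finset.Iio j, a j k)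
          • fderiv ℝ A Y₀ (fderiv ℝ M1 Y₀ (A Y₀))
        + (∑ i, b i * ∑ j ∈ Finset.Iio i, d i j * ∑ k ∈ Finset.Iio j, a j k)
          • fderiv ℝ A Y₀ (fderiv ℝ M1 Y₀ (A Y₀)))
      + ((∑ i, b i * ∑ j ∈ Finset.Iio i, d i j * ∑ k ∈ Finset.Iio j, d j k)
          • fderiv ℝ A Y₀ (fderiv ℝ M1 Y₀ (M1 Y₀))
        + (∑ i, b i * ∑ j ∈ Finset.Iio i, d i j * ∑ k ∈ Finset.Iio j, d j k)
          • fderiv ℝ A Y₀ (fderiv ℝ M1 Y₀ (M1 Y₀))) := by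
    calc (∑ i, b i • ((fderiv ℝ (fderiv ℝ A) Y₀ (w i)) (w i) + fderiv ℝ A Y₀ (T i + T i)))
        = ∑ i,
          ((b i * (∑ j ∈ Finset.Iio i, a i j) ^ 2)
              • (fderiv ℝ (fderiv ℝ A) Y₀ (A Y₀)) (A Y₀)
          + (b i * (∑ j ∈ Finset.Iio i, a i j) * (∑ j ∈ Finset.Iio i, d i j))
              • (fderiv ℝ (fderiv ℝ A) Y₀ (A Y₀)) (M1 Y₀)
          + (b i * (∑ j ∈ Finset.Iio i, a i j) * (∑ j ∈ Finset.Iio i, d i j))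
              • (fderiv ℝ (fderiv ℝ A) Y₀ (M1 Y₀)) (A Y₀)
          + (b i * (∑ j ∈ Finset.Iio i, d i j) ^ 2)
              • (fderiv ℝ (fderiv ℝ A) Y₀ (M1 Y₀)) (M1 Y₀)
          + ((b i * ∑ j ∈ Finset.Iio i, a i j * ∑ k ∈ Finset.Iio j, a j k)
              • fderiv ℝ A Y₀ (fderiv ℝ A Y₀ (A Y₀))
            + (b i * ∑ j ∈ Finset.Iio i, a i j * ∑ k ∈ Finset.Iio j, a j k)
              • fderiv ℝ A Y₀ (fderiv ℝ A Y₀ (A Y₀)))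
          + ((b i * ∑ j ∈ Finset.Iio i, a i j * ∑ k ∈ Finset.Iio j, d j k)
              • fderiv ℝ A Y₀ (fderiv ℝ A Y₀ (M1 Y₀))
            + (b i * ∑ j ∈ Finset.Iio i, a i j * ∑ k ∈ Finset.Iio j, d j k)
              • fderiv ℝ A Y₀ (fderiv ℝ A Y₀ (M1 Y₀)))
          + ((b i * ∑ j ∈ Finset.Iio i, d i j * ∑ k ∈ Finset.Iio j, a j k)
              • fderiv ℝ A Y₀ (fderiv ℝ M1 Y₀ (A Y₀))
            + (b i * ∑ j ∈ Finset.Iio i, d i j * ∑ k ∈ Finset.Iio j, a j k)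
              • fderiv ℝ A Y₀ (fderiv ℝ M1 Y₀ (A Y₀)))
          + ((b i * ∑ j ∈ Finset.Iio i, d i j * ∑ k ∈ Finset.Iio j, d j k)
              • fderiv ℝ A Y₀ (fderiv ℝ M1 Y₀ (M1 Y₀))
            + (b i * ∑ j ∈ Finset.Iio i, d i j * ∑ k ∈ Finset.Iio j, d j k)
              • fderiv ℝ A Y₀ (fderiv ℝ M1 Y₀ (M1 Y₀)))) := by
          refine Finset.sum_congr rfl fun i _ => ?_
          rw [haveW i, map_add, haveT i]
          module
      _ = _ := by
          simp only [Finset.sum_add_distrib, ← Finset.sum_smul]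
  rw [hYt3, hY3, hX]
  simp only [map_add, ContinuousLinearMap.add_apply]
  match_scalars
  all_goals first
    | linear_combination hc1
    | linear_combination hc2
    | linear_combination hc3
    | linear_combination hc4
    | linear_combination hc5
    | linear_combination 2*hc6
    | linear_combination 2*hc7
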